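/- If a value function V on a deterministic task is both valid and optimal, then V is consistent. -/
import Mathlib


variable {S A : Type*}

/-- The state value `V⟨s⟩ = max_{b ∈ A} V(s, b)`. -/
def sval [Fintype A] (V : S → A → ℕ) (s : S) : ℕ := Finset.univ.sup (V s)

/-- The trajectory of states visited in a deterministic task, starting at `s`
and following the action stream `as`. -/
def traj (δ : S → A → S) (s : S) (as : ℕ → A) : ℕ → S
  | 0 => s
  | i + 1 => δ (traj δ s as i) (as i)

/-- The value of the action-path of length `n` starting at `s` and following `as`:
`pval p = max_i clamp(R(sᵢ,aᵢ) − i·K)` (1-based `i`). -/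
def pathVal (δ : S → A → S) (R : S → A → ℕ) (K : ℕ) (s : S) (as : ℕ → A) (n : ℕ) : ℕ :=
  (Finset.range n).sup fun i => ((R (traj δ s as i) (as i) : ℤ) - ((i : ℕ) + 1) * K).toNat

/-- The optimal value of a state: the largest path value among action-paths starting at `s`. -/
noncomputable def optval (δ : S → A → S) (R : S → A → ℕ) (K : ℕ) (s : S) : ℕ :=
  sSup {v | ∃ (n : ℕ) (as : ℕ → A), 0 < n ∧ v = pathVal δ R K s as n}

/-- `V` is valid: `V(s,a) ≤ clamp(max(V⟨δ(s,a)⟩, R(s,a)) − K)` for all `(s,a)`. -/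
def validV [Fintype A] (δ : S → A → S) (R : S → A → ℕ) (K : ℕ) (V : S → A → ℕ) : Prop :=
  ∀ s a, V s a ≤ (max ((sval V (δ s a) : ℤ)) ((R s a : ℤ)) - (K : ℤ)).toNat

/-- `V` is consistent: for every state `s` and every preferred action `a` at `s`,
`V⟨s⟩ = clamp(max(V⟨δ(s,a)⟩, R(s,a)) − K)`. -/
def consistentV [Fintype A] (δ : S → A → S) (R : S → A → ℕ) (K : ℕ) (V : S → A → ℕ) : Prop :=
  ∀ s a, V s a = sval V s →
    sval V s = (max ((sval V (δ s a) : ℤ)) ((R s a : ℤ)) - (K : ℤ)).toNat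

lemma pathVal_le_sup [Fintype S] [Fintype A] (δ : S → A → S) (R : S → A → ℕ) (K : ℕ)
    (s : S) (as : ℕ → A) (n : ℕ) :
    pathVal δ R K s as n ≤ (Finset.univ : Finset (S × A)).sup fun p => R p.1 p.2 := by
  apply Finset.sup_le
  intro i _
  have h1 : ((R (traj δ s as i) (as i) : ℤ) - ((i : ℕ) + 1) * K).toNat
      ≤ R (traj δ s as i) (as i) := by
    have : (0 : ℤ) ≤ ((i : ℕ) + 1) * K := by positivity
    omega
  exact h1.trans (Finset.le_sup (f := fun p : S × A => R p.1 p.2)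
    (Finset.mem_univ (traj δ s as i, as i)))

lemma optval_bdd [Fintype S] [Fintype A] (δ : S → A → S) (R : S → A → ℕ) (K : ℕ) (s : S) :
    BddAbove {v | ∃ (n : ℕ) (as : ℕ → A), 0 < n ∧ v = pathVal δ R K s as n} := by
  refine ⟨(Finset.univ : Finset (S × A)).sup fun p => R p.1 p.2, ?_⟩
  rintro v ⟨n, as, _, rfl⟩
  exact pathVal_le_sup δ R K s as n

lemma optval_ge_one_step [Fintype S] [Fintype A] (δ : S → A → S) (R : S → A → ℕ) (K : ℕ)
    (s : S) (a : A) : ((R s a : ℤ) - K).toNat ≤ optval δ R K s := by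
  apply le_csSup (optval_bdd δ R K s)
  refine ⟨1, fun _ => a, one_pos, ?_⟩
  simp [pathVal, traj]

lemma traj_cons (δ : S → A → S) (s : S) (a : A) (as : ℕ → A) (i : ℕ) :
    traj δ s (fun j => if j = 0 then a else as (j - 1)) (i + 1) = traj δ (δ s a) as i := by
  induction i with
  | zero => simp [traj]
  | succ i ih =>
    show δ (traj δ s _ (i + 1)) _ = _
    rw [ih]; simp [traj]

lemma optval_ge_next [Fintype S] [Fintype A] (δ : S → A → S) (R : S → A → ℕ) (K : ℕ)
    (s : S) (a : A) : ((optval δ R K (δ s a) : ℤ) - K).toNat ≤ optval δ R K s := by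
  set s' := δ s a
  have hne : {v | ∃ (n : ℕ) (as : ℕ → A), 0 < n ∧ v = pathVal δ R K s' as n}.Nonempty :=
    ⟨pathVal δ R K s' (fun _ => a) 1, 1, fun _ => a, one_pos, rfl⟩
  obtain ⟨n, as, hn, heq⟩ : optval δ R K s' ∈ _ := Nat.sSup_mem hne (optval_bdd δ R K s')
  set as' : ℕ → A := fun j => if j = 0 then a else as (j - 1) with has'
  -- find index achieving the sup
  obtain ⟨j, hj, hjval⟩ := Finset.exists_mem_eq_sup (Finset.range n)
    ⟨0, Finset.mem_range.mpr hn⟩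
    (fun i => ((R (traj δ s' as i) (as i) : ℤ) - ((i : ℕ) + 1) * K).toNat)
  have hpv : pathVal δ R K s' as n
      = ((R (traj δ s' as j) (as j) : ℤ) - ((j : ℕ) + 1) * K).toNat := hjval
  set y : ℤ := (R (traj δ s' as j) (as j) : ℤ) - ((j : ℕ) + 1) * K with hy
  have hterm : ((R (traj δ s as' (j + 1)) (as' (j + 1)) : ℤ)
      - (((j + 1 : ℕ) : ℤ) + 1) * K).toNat ≤ pathVal δ R K s as' (n + 1) :=
    Finset.le_sup (f := fun i : ℕ => ((R (traj δ s as' i) (as' i) : ℤ) - ((i : ℕ) + 1) * K).toNat)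
      (Finset.mem_range.mpr (by have := Finset.mem_range.mp hj; omega))
  have htraj : traj δ s as' (j + 1) = traj δ s' as j := traj_cons δ s a as j
  have has1 : as' (j + 1) = as j := by simp [has']
  have hterm' : (y - K).toNat ≤ pathVal δ R K s as' (n + 1) := by
    rw [htraj, has1] at hterm
    have : (R (traj δ s' as j) (as j) : ℤ) - (((j + 1 : ℕ) : ℤ) + 1) * K = y - K := by
      push_cast [hy]; ring
    rwa [this] at hterm
  have hmem : pathVal δ R K s as' (n + 1)
      ∈ {v | ∃ (m : ℕ) (bs : ℕ → A), 0 < m ∧ v = pathVal δ R K s bs m} :=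
    ⟨n + 1, as', by omega, rfl⟩
  have hle : pathVal δ R K s as' (n + 1) ≤ optval δ R K s :=
    le_csSup (optval_bdd δ R K s) hmem
  have : ((optval δ R K s' : ℤ) - K).toNat ≤ (y - K).toNat := by
    rw [heq, hpv]; omega
  omega

/-- If a value function on a deterministic task is both valid and optimal,
then it is consistent. -/
theorem valid_optimal_imp_consistent [Fintype S] [Fintype A]
    (δ : S → A → S) (R : S → A → ℕ) (K : ℕ) (hK : 1 ≤ K) (V : S → A → ℕ)
    (hvalid : validV δ R K V)
    (hopt : ∀ s, sval V s = optval δ R K s) :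
    consistentV δ R K V := by
  intro s a ha
  apply le_antisymm
  · rw [← ha]; exact hvalid s a
  · have h1 : ((R s a : ℤ) - K).toNat ≤ optval δ R K s := optval_ge_one_step δ R K s a
    have h2 : ((optval δ R K (δ s a) : ℤ) - K).toNat ≤ optval δ R K s :=
      optval_ge_next δ R K s a
    rw [hopt s, hopt (δ s a)]
    rcases le_total ((optval δ R K (δ s a) : ℤ)) ((R s a : ℤ)) with h | h
    · rw [max_eq_right h]; exact h1
    · rw [max_eq_left h]; exact h2
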